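/- arXiv:1107.1871 — 2 statements merged into one kernel-verified Lean document; each statement's English description precedes it below -/
import Mathlib

section
/- Let d ≥ 2 be an integer, set e = d if d is odd and e = d/2 if d is even, and let n ≥ 0 be an integer. Then B_d(∏_{i=n+1}^{n+e}(q^{2i} − 1)) = 4ne + 2e² + 2e + d/2. -/
open Polynomial

/-- `φ_d(r)`: for `r = 1` it is `1/2`; for `r ≥ 2` it is the number of integers `j` with
`1 ≤ j ≤ r / d` that are coprime to `r`. -/
noncomputable def phiD (d r : ℕ) : ℚ :=
  if r = 1 then 1 / 2
  else (((Finset.Icc 1 (r / d)).filter fun j => Nat.gcd j r = 1).card : ℚ)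

/-- `B_d(f)` for `f` a rational constant times a power of `q` times a product of cyclotomic
polynomials: if `f = c·q^a·∏_{r≥1} Φ_r^{m_r}`, then `B_d(f) = 2a + Σ_r m_r·(φ(r) + d·φ_d(r))`.
The exponents are recovered as multiplicities; since `Φ_r ∣ f` forces
`φ(r) ≤ deg f` and `r ≤ 2·φ(r)²`, the sum below captures every relevant `r`. -/
noncomputable def Bd (d : ℕ) (f : Polynomial ℚ) : ℚ :=
  2 * (multiplicity X f : ℚ) +
    ∑ r ∈ Finset.Icc 1 (2 * f.natDegree ^ 2 + 1),
      (multiplicity (cyclotomic r ℚ) f : ℚ) * ((Nat.totient r : ℚ) + d * phiD d r)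

/-! ### Auxiliary lemmas -/

lemma BdAux.emult_cyclo_cyclo (r s : ℕ) (hr : 0 < r) (hs : 0 < s) :
    emultiplicity (cyclotomic r ℚ) (cyclotomic s ℚ) = if r = s then 1 else 0 := by
  split_ifs with h
  · subst h
    exact (FiniteMultiplicity.of_not_isUnit (cyclotomic.irreducible_rat hr).not_isUnit
      (cyclotomic_ne_zero r ℚ)).emultiplicity_self
  · rw [emultiplicity_eq_zero]
    intro hdvd
    exact h (cyclotomic_injective (R := ℚ)
      (eq_of_monic_of_associated (cyclotomic.monic r ℚ) (cyclotomic.monic s ℚ)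
        ((cyclotomic.irreducible_rat hr).associated_of_dvd (cyclotomic.irreducible_rat hs) hdvd)))

lemma BdAux.emult_cyclo_pow (r m : ℕ) (hr : 0 < r) (hm : 0 < m) :
    emultiplicity (cyclotomic r ℚ) ((X : ℚ[X]) ^ m - 1) = if r ∣ m then 1 else 0 := by
  have hp : Prime (cyclotomic r ℚ) := (cyclotomic.irreducible_rat hr).prime
  rw [← prod_cyclotomic_eq_X_pow_sub_one hm ℚ, Finset.emultiplicity_prod hp]
  rw [Finset.sum_congr rfl (fun s hs =>
    BdAux.emult_cyclo_cyclo r s hr (Nat.pos_of_mem_divisors hs))]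
  rw [Finset.sum_ite_eq m.divisors r (fun _ => (1 : ℕ∞))]
  simp [Nat.mem_divisors, hm.ne']

lemma BdAux.fac_ne_zero (i : ℕ) (hi : 0 < i) : ((X : ℚ[X]) ^ (2 * i) - 1) ≠ 0 := by
  have := X_pow_sub_C_ne_zero (R := ℚ) (n := 2 * i) (by omega) 1
  simpa using this

lemma BdAux.mult_cyclo_f (n e r : ℕ) (hr : 0 < r) :
    multiplicity (cyclotomic r ℚ) (∏ i ∈ Finset.Icc (n+1) (n+e), ((X:ℚ[X]) ^ (2*i) - 1))
      = ((Finset.Icc (n+1) (n+e)).filter (fun i => r ∣ 2*i)).card := by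
  have hp : Prime (cyclotomic r ℚ) := (cyclotomic.irreducible_rat hr).prime
  have hf0 : (∏ i ∈ Finset.Icc (n+1) (n+e), ((X:ℚ[X]) ^ (2*i) - 1)) ≠ 0 := by
    rw [Finset.prod_ne_zero_iff]
    intro i hi
    exact BdAux.fac_ne_zero i (by simp [Finset.mem_Icc] at hi; omega)
  have hfin := FiniteMultiplicity.of_not_isUnit hp.not_isUnit hf0
  have hem : emultiplicity (cyclotomic r ℚ) (∏ i ∈ Finset.Icc (n+1) (n+e), ((X:ℚ[X]) ^ (2*i) - 1))
      = (((Finset.Icc (n+1) (n+e)).filter (fun i => r ∣ 2*i)).card : ℕ∞) := by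
    rw [Finset.emultiplicity_prod hp]
    have : ∀ i ∈ Finset.Icc (n+1) (n+e),
        emultiplicity (cyclotomic r ℚ) ((X:ℚ[X]) ^ (2*i) - 1) = if r ∣ 2*i then 1 else 0 := by
      intro i hi
      exact BdAux.emult_cyclo_pow r (2*i) hr (by simp [Finset.mem_Icc] at hi; omega)
    rw [Finset.sum_congr rfl this, Finset.sum_boole]
  rw [hfin.emultiplicity_eq_multiplicity] at hem
  exact_mod_cast hem

lemma BdAux.mult_X_f (n e : ℕ) :
    multiplicity (X : ℚ[X]) (∏ i ∈ Finset.Icc (n+1) (n+e), ((X:ℚ[X]) ^ (2*i) - 1)) = 0 := by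
  rw [multiplicity_eq_zero, X_dvd_iff, Polynomial.coeff_zero_eq_eval_zero, Polynomial.eval_prod]
  rw [show (¬∏ j ∈ Finset.Icc (n+1) (n+e), Polynomial.eval 0 ((X:ℚ[X]) ^ (2 * j) - 1) = 0) ↔
      (∏ j ∈ Finset.Icc (n+1) (n+e), Polynomial.eval 0 ((X:ℚ[X]) ^ (2 * j) - 1) ≠ 0) from Iff.rfl,
    Finset.prod_ne_zero_iff]
  intro i hi
  simp only [Polynomial.eval_sub, Polynomial.eval_pow, Polynomial.eval_X, Polynomial.eval_one]
  rw [zero_pow (by simp [Finset.mem_Icc] at hi; omega)]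
  norm_num

lemma BdAux.gcd_mul_div (m r j : ℕ) (hm : 0 < m) (hrm : r ∣ m) (hgcd : Nat.gcd j r = 1) :
    Nat.gcd (j * (m / r)) m = m / r := by
  obtain ⟨s, rfl⟩ := hrm
  have hr0 : 0 < r := by
    rcases Nat.eq_zero_or_pos r with h | h
    · simp [h] at hm
    · exact h
  rw [Nat.mul_div_cancel_left s hr0, Nat.gcd_mul_right, hgcd, one_mul]

lemma BdAux.gauss_phiD (d m : ℕ) (hd : 0 < d) (hm : 0 < m) :
    ∑ r ∈ m.divisors, ((Finset.Icc 1 (r / d)).filter fun j => Nat.gcd j r = 1).card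
      = m / d := by
  have key : (m.divisors.sigma fun r => (Finset.Icc 1 (r / d)).filter fun j => Nat.gcd j r = 1).card
      = (Finset.Icc 1 (m / d)).card := by
    apply Finset.card_bij (fun p _ => p.2 * (m / p.1))
    · rintro ⟨r, j⟩ hp
      simp only [Finset.mem_sigma, Nat.mem_divisors, Finset.mem_filter, Finset.mem_Icc] at hp
      obtain ⟨⟨hrm, _⟩, ⟨hj1, hjr⟩, hgcd⟩ := hp
      have hr0 : 0 < r := Nat.pos_of_dvd_of_pos hrm hm
      have hq : r * (m / r) = m := Nat.mul_div_cancel' hrm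
      have hq0 : 0 < m / r := Nat.div_pos (Nat.le_of_dvd hm hrm) hr0
      simp only [Finset.mem_Icc]
      refine ⟨Nat.one_le_iff_ne_zero.2 (Nat.mul_ne_zero (by omega) (by omega)), ?_⟩
      rw [Nat.le_div_iff_mul_le hd]
      have hjd : j * d ≤ r := (Nat.le_div_iff_mul_le hd).1 hjr
      calc j * (m / r) * d = j * d * (m / r) := by ring
        _ ≤ r * (m / r) := Nat.mul_le_mul_right _ hjd
        _ = m := hq
    · rintro ⟨r, j⟩ hp ⟨r', j'⟩ hp' heq
      simp only [Finset.mem_sigma, Nat.mem_divisors, Finset.mem_filter, Finset.mem_Icc] at hp hp'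
      obtain ⟨⟨hrm, _⟩, ⟨hj1, hjr⟩, hgcd⟩ := hp
      obtain ⟨⟨hrm', _⟩, ⟨hj1', hjr'⟩, hgcd'⟩ := hp'
      have hr0 : 0 < r := Nat.pos_of_dvd_of_pos hrm hm
      have hr0' : 0 < r' := Nat.pos_of_dvd_of_pos hrm' hm
      simp only at heq
      have hg : Nat.gcd (j * (m / r)) m = m / r := BdAux.gcd_mul_div m r j hm hrm hgcd
      have hg' : Nat.gcd (j' * (m / r')) m = m / r' := BdAux.gcd_mul_div m r' j' hm hrm' hgcd'
      have hdiv : m / r = m / r' := by rw [← hg, ← hg', heq]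
      have hrr : r = r' := by
        have h1 : m / (m / r) = r := Nat.div_div_self hrm hm.ne'
        have h2 : m / (m / r') = r' := Nat.div_div_self hrm' hm.ne'
        rw [← h1, ← h2, hdiv]
      subst hrr
      have hq0 : 0 < m / r := Nat.div_pos (Nat.le_of_dvd hm hrm) hr0
      have : j = j' := Nat.eq_of_mul_eq_mul_right hq0 heq
      simp [this]
    · intro k hk
      simp only [Finset.mem_Icc] at hk
      obtain ⟨hk1, hkd⟩ := hk
      have hk0 : 0 < k := hk1
      set g := Nat.gcd k m with hgdef
      have hg0 : 0 < g := Nat.gcd_pos_of_pos_left m hk0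
      have hgk : g ∣ k := Nat.gcd_dvd_left k m
      have hgm : g ∣ m := Nat.gcd_dvd_right k m
      refine ⟨⟨m / g, k / g⟩, ?_, ?_⟩
      · simp only [Finset.mem_sigma, Nat.mem_divisors, Finset.mem_filter, Finset.mem_Icc]
        refine ⟨⟨Nat.div_dvd_of_dvd hgm, hm.ne'⟩, ⟨?_, ?_⟩, Nat.coprime_div_gcd_div_gcd hg0⟩
        · exact (Nat.one_le_div_iff hg0).2 (Nat.le_of_dvd hk0 hgk)
        · rw [Nat.le_div_iff_mul_le hd, Nat.le_div_iff_mul_le hg0]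
          calc k / g * d * g = k / g * g * d := by ring
            _ = k * d := by rw [Nat.div_mul_cancel hgk]
            _ ≤ m := (Nat.le_div_iff_mul_le hd).1 hkd
      · show k / g * (m / (m / g)) = k
        rw [Nat.div_div_self hgm hm.ne', Nat.div_mul_cancel hgk]
  rw [← Finset.card_sigma, key]
  simp [Nat.card_Icc]

lemma BdAux.sum_shift_periodic (g : ℕ → ℕ) (e : ℕ) (hg : ∀ i, g (i + e) = g i) (m : ℕ) :
    ∑ i ∈ Finset.range e, g (i + m) = ∑ i ∈ Finset.range e, g i := by
  induction m with
  | zero => simp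
  | succ m ih =>
    have h1 : ∑ i ∈ Finset.range (e + 1), g (i + m)
        = ∑ i ∈ Finset.range e, g (i + m) + g (e + m) := Finset.sum_range_succ _ _
    have h2 : ∑ i ∈ Finset.range (e + 1), g (i + m)
        = (∑ i ∈ Finset.range e, g (i + 1 + m)) + g (0 + m) := Finset.sum_range_succ' _ _
    have h3 : g (e + m) = g m := by rw [add_comm e m, hg]
    simp only [Nat.zero_add] at h2
    have h4 : ∀ i, i + 1 + m = i + (m + 1) := by omega
    calc ∑ i ∈ Finset.range e, g (i + (m + 1))
        = ∑ i ∈ Finset.range e, g (i + 1 + m) := by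
          refine Finset.sum_congr rfl fun i _ => by rw [h4]
      _ = ∑ i ∈ Finset.range e, g (i + m) := by omega
      _ = ∑ i ∈ Finset.range e, g i := ih

lemma BdAux.sum_Icc_periodic (g : ℕ → ℕ) (e n : ℕ) (hg : ∀ i, g (i + e) = g i) :
    ∑ i ∈ Finset.Icc (n + 1) (n + e), g i = ∑ i ∈ Finset.range e, g i := by
  rw [← Finset.Ico_add_one_right_eq_Icc, Finset.sum_Ico_eq_sum_range]
  have h : n + e + 1 - (n + 1) = e := by omega
  rw [h]
  calc ∑ i ∈ Finset.range e, g (n + 1 + i)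
      = ∑ i ∈ Finset.range e, g (i + (n + 1)) := by
        refine Finset.sum_congr rfl fun i _ => by rw [add_comm]
    _ = _ := BdAux.sum_shift_periodic g e hg (n + 1)

lemma BdAux.smod_odd (d : ℕ) (hd2 : 2 ≤ d) (hodd : d % 2 = 1) :
    (∑ k ∈ Finset.range d, 2 * k % d) * 2 = d * (d - 1) := by
  have hkey : ∑ k ∈ Finset.range d, 2 * k % d = ∑ k ∈ Finset.range d, k := by
    refine Finset.sum_nbij' (i := fun k => 2 * k % d) (j := fun k => k * ((d + 1) / 2) % d)
      ?_ ?_ ?_ ?_ ?_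
    · intro k _; exact Finset.mem_range.2 (Nat.mod_lt _ (by omega))
    · intro k _; exact Finset.mem_range.2 (Nat.mod_lt _ (by omega))
    · intro k hk
      simp only [Finset.mem_range] at hk
      have h2 : 2 * ((d + 1) / 2) = d + 1 := by omega
      calc 2 * k % d * ((d + 1) / 2) % d = 2 * k * ((d + 1) / 2) % d := by
            rw [Nat.mod_mul_mod]
        _ = k * (2 * ((d + 1) / 2)) % d := by ring_nf
        _ = k * (d + 1) % d := by rw [h2]
        _ = k := by
            rw [Nat.mul_add, Nat.mul_one, mul_comm k d, Nat.mul_add_mod, Nat.mod_eq_of_lt hk]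
    · intro k hk
      simp only [Finset.mem_range] at hk
      have h2 : 2 * ((d + 1) / 2) = d + 1 := by omega
      calc 2 * (k * ((d + 1) / 2) % d) % d = 2 * (k * ((d + 1) / 2)) % d := by
            rw [Nat.mul_mod_mod]
        _ = k * (2 * ((d + 1) / 2)) % d := by ring_nf
        _ = k * (d + 1) % d := by rw [h2]
        _ = k := by
            rw [Nat.mul_add, Nat.mul_one, mul_comm k d, Nat.mul_add_mod, Nat.mod_eq_of_lt hk]
    · intro k _; rfl
  rw [hkey, Finset.sum_range_id_mul_two]

lemma BdAux.smod_main (d n e : ℕ) (hd : 2 ≤ d) (he : e = if d % 2 = 1 then d else d / 2) :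
    (∑ i ∈ Finset.Icc (n + 1) (n + e), 2 * i % d) * 2 = (e - 1) * d := by
  by_cases h : d % 2 = 1
  · rw [if_pos h] at he
    subst he
    have hper : ∀ i, 2 * (i + e) % e = 2 * i % e := by
      intro i
      rw [show 2 * (i + e) = 2 * i + e * 2 by ring, Nat.add_mul_mod_self_left]
    rw [BdAux.sum_Icc_periodic _ e n hper, BdAux.smod_odd e hd h, Nat.mul_comm]
  · rw [if_neg h] at he
    have hde : d = 2 * e := by omega
    have hper : ∀ i, 2 * (i + e) % d = 2 * i % d := by
      intro i
      rw [show 2 * (i + e) = 2 * i + d * 1 by omega, Nat.add_mul_mod_self_left]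
    rw [BdAux.sum_Icc_periodic _ e n hper]
    have hsum : ∑ k ∈ Finset.range e, 2 * k % d = 2 * ∑ k ∈ Finset.range e, k := by
      rw [Finset.mul_sum]
      refine Finset.sum_congr rfl fun k hk => ?_
      exact Nat.mod_eq_of_lt (by simp only [Finset.mem_range] at hk; omega)
    rw [hsum, show 2 * (∑ k ∈ Finset.range e, k) * 2 = 2 * ((∑ k ∈ Finset.range e, k) * 2) by ring,
      Finset.sum_range_id_mul_two, hde]
    ring

lemma BdAux.innerDivSum (d m : ℕ) (hd : 2 ≤ d) (hm : 0 < m) :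
    ∑ r ∈ m.divisors, ((Nat.totient r : ℚ) + d * phiD d r)
      = (m : ℚ) + (d : ℚ) * ((m / d : ℕ) : ℚ) + (d : ℚ) / 2 := by
  rw [Finset.sum_add_distrib]
  have h1 : ∑ r ∈ m.divisors, (Nat.totient r : ℚ) = m := by
    rw [← Nat.cast_sum, Nat.sum_totient]
  have h2 : ∑ r ∈ m.divisors, (d : ℚ) * phiD d r
      = d * ((m / d : ℕ) : ℚ) + (d : ℚ) / 2 := by
    rw [← Finset.mul_sum]
    have key : ∑ r ∈ m.divisors, phiD d r = ((m / d : ℕ) : ℚ) + 1 / 2 := by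
      have hsplit : ∀ r ∈ m.divisors, phiD d r
          = (((Finset.Icc 1 (r / d)).filter fun j => Nat.gcd j r = 1).card : ℚ)
            + (if r = 1 then (1 : ℚ) / 2 else 0) := by
        intro r _
        unfold phiD
        split_ifs with h
        · subst h
          rw [Nat.div_eq_of_lt (by omega : 1 < d)]
          simp
        · ring
      rw [Finset.sum_congr rfl hsplit, Finset.sum_add_distrib, ← Nat.cast_sum,
        BdAux.gauss_phiD d m (by omega) hm,
        Finset.sum_ite_eq' m.divisors 1 (fun _ => (1 : ℚ) / 2)]
      simp [Nat.one_mem_divisors.2 hm.ne']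
    rw [key]
    ring
  rw [h1, h2]
  ring

/-- Let `d ≥ 2`, set `e = d` if `d` is odd and `e = d/2` if `d` is even, and let `n ≥ 0`.
Then `B_d(∏_{i=n+1}^{n+e}(q^{2i} − 1)) = 4ne + 2e² + 2e + d/2`. -/
theorem Bd_prod_consecutive_even_powers (d n e : ℕ) (hd : 2 ≤ d)
    (he : e = if d % 2 = 1 then d else d / 2) :
    Bd d (∏ i ∈ Finset.Icc (n + 1) (n + e), (X ^ (2 * i) - 1))
      = 4 * (n : ℚ) * e + 2 * (e : ℚ) ^ 2 + 2 * (e : ℚ) + (d : ℚ) / 2 := by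
  have he1 : 1 ≤ e := by split_ifs at he <;> omega
  simp only [Bd, BdAux.mult_X_f n e, Nat.cast_zero, mul_zero, zero_add]
  set N := 2 * (∏ i ∈ Finset.Icc (n+1) (n+e), ((X:ℚ[X]) ^ (2*i) - 1)).natDegree ^ 2 + 1 with hN
  have hfac : ∀ i ∈ Finset.Icc (n+1) (n+e), ((X:ℚ[X]) ^ (2*i) - 1) ≠ 0 := fun i hi =>
    BdAux.fac_ne_zero i (by simp [Finset.mem_Icc] at hi; omega)
  have hdeg : ∀ i ∈ Finset.Icc (n+1) (n+e), 2 * i ≤ N := by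
    intro i hi
    have hnd : (∏ i ∈ Finset.Icc (n+1) (n+e), ((X:ℚ[X]) ^ (2*i) - 1)).natDegree
        = ∑ i ∈ Finset.Icc (n+1) (n+e), 2 * i := by
      rw [Polynomial.natDegree_prod _ _ hfac]
      refine Finset.sum_congr rfl fun i _ => ?_
      have := Polynomial.natDegree_X_pow_sub_C (R := ℚ) (n := 2*i) (r := 1)
      simpa using this
    have h1 : 2 * i ≤ (∏ i ∈ Finset.Icc (n+1) (n+e), ((X:ℚ[X]) ^ (2*i) - 1)).natDegree := by
      rw [hnd]
      exact Finset.single_le_sum (f := fun i => 2*i) (fun _ _ => Nat.zero_le _) hi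
    have h2 := Nat.le_self_pow (n := 2) (by norm_num)
      ((∏ i ∈ Finset.Icc (n+1) (n+e), ((X:ℚ[X]) ^ (2*i) - 1)).natDegree)
    omega
  have step1 : ∀ r ∈ Finset.Icc 1 N,
      (multiplicity (cyclotomic r ℚ)
        (∏ i ∈ Finset.Icc (n+1) (n+e), ((X:ℚ[X]) ^ (2*i) - 1)) : ℚ)
          * ((Nat.totient r : ℚ) + d * phiD d r)
      = ∑ i ∈ Finset.Icc (n+1) (n+e),
          (if r ∣ 2 * i then ((Nat.totient r : ℚ) + d * phiD d r) else 0) := by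
    intro r hr
    rw [BdAux.mult_cyclo_f n e r (by simp [Finset.mem_Icc] at hr; omega)]
    rw [← Finset.sum_boole, Finset.sum_mul]
    refine Finset.sum_congr rfl fun i _ => ?_
    split_ifs <;> simp
  rw [Finset.sum_congr rfl step1, Finset.sum_comm]
  have step2 : ∀ i ∈ Finset.Icc (n+1) (n+e),
      (∑ r ∈ Finset.Icc 1 N, if r ∣ 2*i then ((Nat.totient r : ℚ) + d * phiD d r) else 0)
        = 2 * (i : ℚ) + (d : ℚ) * ((2*i/d : ℕ) : ℚ) + (d : ℚ)/2 := by
    intro i hi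
    obtain ⟨hi1, hi2⟩ := Finset.mem_Icc.1 hi
    have hset : (Finset.Icc 1 N).filter (fun r => r ∣ 2*i) = (2*i).divisors := by
      ext r
      simp only [Finset.mem_filter, Finset.mem_Icc, Nat.mem_divisors]
      constructor
      · rintro ⟨⟨h1, h2⟩, h3⟩
        exact ⟨h3, by omega⟩
      · rintro ⟨h1, h2⟩
        have hr1 : 1 ≤ r := Nat.pos_of_dvd_of_pos h1 (by omega)
        have hrle : r ≤ 2*i := Nat.le_of_dvd (by omega) h1
        exact ⟨⟨hr1, le_trans hrle (hdeg i hi)⟩, h1⟩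
    rw [← Finset.sum_filter, hset, BdAux.innerDivSum d (2*i) hd (by omega)]
    push_cast
    ring
  rw [Finset.sum_congr rfl step2]
  -- final arithmetic
  have hG := Finset.sum_range_id_mul_two e
  have hS2 : ∑ i ∈ Finset.Icc (n+1) (n+e), 2*i
      = 2*(n+1)*e + 2*(∑ j ∈ Finset.range e, j) := by
    rw [← Finset.Ico_add_one_right_eq_Icc, Finset.sum_Ico_eq_sum_range]
    have h : n + e + 1 - (n + 1) = e := by omega
    rw [h]
    have : ∀ j ∈ Finset.range e, 2*(n+1+j) = 2*(n+1) + 2*j := fun j _ => by ring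
    rw [Finset.sum_congr rfl this, Finset.sum_add_distrib, Finset.sum_const, ← Finset.mul_sum]
    simp [Finset.card_range, smul_eq_mul]
    ring
  have hmod := BdAux.smod_main d n e hd he
  have hdT : d * (∑ i ∈ Finset.Icc (n+1) (n+e), 2*i/d)
      + (∑ i ∈ Finset.Icc (n+1) (n+e), 2*i % d)
      = ∑ i ∈ Finset.Icc (n+1) (n+e), 2*i := by
    rw [Finset.mul_sum, ← Finset.sum_add_distrib]
    exact Finset.sum_congr rfl fun i _ => Nat.div_add_mod (2*i) d
  rw [Finset.sum_add_distrib, Finset.sum_add_distrib, Finset.sum_const, Nat.card_Icc]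
  have c1 : ∑ i ∈ Finset.Icc (n+1) (n+e), 2 * (i:ℚ)
      = ((∑ i ∈ Finset.Icc (n+1) (n+e), 2*i : ℕ) : ℚ) := by
    rw [Nat.cast_sum]
    exact Finset.sum_congr rfl fun i _ => by push_cast; ring
  have c2 : ∑ i ∈ Finset.Icc (n+1) (n+e), (d:ℚ) * ((2*i/d : ℕ) : ℚ)
      = (d:ℚ) * ((∑ i ∈ Finset.Icc (n+1) (n+e), 2*i/d : ℕ) : ℚ) := by
    rw [Nat.cast_sum, Finset.mul_sum]
  rw [c1, c2]
  have hcard : n + e + 1 - (n + 1) = e := by omega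
  rw [hcard]
  have q1 : (d:ℚ) * ((∑ i ∈ Finset.Icc (n+1) (n+e), 2*i/d : ℕ) : ℚ)
      + ((∑ i ∈ Finset.Icc (n+1) (n+e), 2*i % d : ℕ) : ℚ)
      = ((∑ i ∈ Finset.Icc (n+1) (n+e), 2*i : ℕ) : ℚ) := by exact_mod_cast hdT
  have q2 : ((∑ i ∈ Finset.Icc (n+1) (n+e), 2*i % d : ℕ) : ℚ) * 2
      = ((e:ℚ) - 1) * d := by
    have := hmod
    have h := congrArg (Nat.cast : ℕ → ℚ) this
    push_cast [Nat.cast_sub he1] at h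
    rw [Nat.cast_sum]
    exact h
  have q3 : ((∑ i ∈ Finset.Icc (n+1) (n+e), 2*i : ℕ) : ℚ)
      = 2*((n:ℚ)+1)*e + 2*((∑ j ∈ Finset.range e, j : ℕ) : ℚ) := by exact_mod_cast hS2
  have q4 : ((∑ j ∈ Finset.range e, j : ℕ) : ℚ) * 2 = (e:ℚ) * ((e:ℚ) - 1) := by
    have h := congrArg (Nat.cast : ℕ → ℚ) hG
    push_cast [Nat.cast_sub he1] at h
    rw [Nat.cast_sum]
    exact h
  rw [nsmul_eq_mul]
  linear_combination q1 + 2*q3 + 2*q4 - q2/2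
end

section
/- Let d ≥ 2 be an even integer and e = d/2, and let i, j ≥ 0 be integers; when j > i, suppose additionally that e does not divide j − i. Then: B_d(q^{i+e} + q^j) − B_d(q^i − q^j) equals d if i > j and equals 0 if i < j; and B_d(q^{i+e} − q^j) − B_d(q^i + q^j) equals d if i − j > −e and equals 0 if i − j < −e. -/
open Polynomial

-- s/e = (s+e)/(2e) for s < 2e
lemma halfdiv (e s : ℕ) (he : 1 ≤ e) (hs : s < 2*e) : s / e = (s + e) / (2*e) := by
  rcases lt_or_ge s e with h | h
  · rw [Nat.div_eq_of_lt h, Nat.div_eq_of_lt (by omega)]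
  · rw [Nat.div_eq_of_lt_le (k := 1) (by omega) (by omega), Nat.div_eq_of_lt_le (k := 1) (by omega) (by omega)]

lemma natlem1 (e m : ℕ) (he : 1 ≤ e) : (m + e) / e = (m + e) / (2*e) + m / (2*e) + 1 := by
  obtain ⟨q, s, hm, hs⟩ : ∃ q s, m = 2*e*q + s ∧ s < 2*e :=
    ⟨m / (2*e), m % (2*e), by rw [Nat.div_add_mod], Nat.mod_lt _ (by omega)⟩
  subst hm
  have h1 : (2*e*q + s + e) / e = 2*q + (s+e)/e := by
    rw [show 2*e*q + s + e = e*(2*q) + (s+e) by ring, Nat.mul_add_div he]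
  have h2 : (2*e*q + s + e) / (2*e) = q + (s+e)/(2*e) := by
    rw [show 2*e*q + s + e = 2*e*q + (s+e) by ring, Nat.mul_add_div (by omega)]
  have h3 : (2*e*q + s) / (2*e) = q := by
    rw [Nat.mul_add_div (by omega), Nat.div_eq_of_lt hs, add_zero]
  have h4 : (s+e)/e = s/e + 1 := Nat.add_div_right s he
  rw [h1, h2, h3, h4, halfdiv e s he hs]
  ring

lemma natlem2 (e m : ℕ) (he : 1 ≤ e) : m / e = m / (2*e) + (m + e) / (2*e) := by
  obtain ⟨q, s, hm, hs⟩ : ∃ q s, m = 2*e*q + s ∧ s < 2*e :=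
    ⟨m / (2*e), m % (2*e), by rw [Nat.div_add_mod], Nat.mod_lt _ (by omega)⟩
  subst hm
  have h1 : (2*e*q + s) / e = 2*q + s/e := by
    rw [show 2*e*q + s = e*(2*q) + s by ring, Nat.mul_add_div he]
  have h2 : (2*e*q + s + e) / (2*e) = q + (s+e)/(2*e) := by
    rw [show 2*e*q + s + e = 2*e*q + (s+e) by ring, Nat.mul_add_div (by omega)]
  have h3 : (2*e*q + s) / (2*e) = q := by
    rw [Nat.mul_add_div (by omega), Nat.div_eq_of_lt hs, add_zero]
  rw [h1, h2, h3, halfdiv e s he hs]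
  ring


lemma count_lem (d m : ℕ) (hd : 2 ≤ d) (hm : 1 ≤ m) :
    ∑ r ∈ m.divisors, ((Finset.Icc 1 (r / d)).filter fun j => Nat.gcd j r = 1).card
      = m / d := by
  classical
  rw [← Finset.card_sigma]
  rw [show m / d = (Finset.Icc 1 (m / d)).card by simp]
  refine Finset.card_bij' (fun p _ => p.2 * (m / p.1))
    (fun k _ => ⟨m / Nat.gcd k m, k / Nat.gcd k m⟩) ?hi ?hj ?left ?right
  case hi =>
    rintro ⟨r, j⟩ hp
    simp only [Finset.mem_sigma, Nat.mem_divisors, Finset.mem_filter, Finset.mem_Icc] at hp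
    obtain ⟨⟨hrm, hm0⟩, ⟨hj1, hjrd⟩, hgcd⟩ := hp
    have hr0 : 0 < r := Nat.pos_of_dvd_of_pos hrm (by omega)
    have hmr : 0 < m / r := Nat.div_pos (Nat.le_of_dvd (by omega) hrm) hr0
    have hjd : j * d ≤ r := (Nat.le_div_iff_mul_le (by omega)).mp hjrd
    simp only [Finset.mem_Icc]
    constructor
    · exact Nat.one_le_iff_ne_zero.mpr (by positivity)
    · rw [Nat.le_div_iff_mul_le (by omega)]
      calc j * (m / r) * d = (j * d) * (m / r) := by ring
        _ ≤ r * (m / r) := Nat.mul_le_mul_right _ hjd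
        _ = m := Nat.mul_div_cancel' hrm
  case hj =>
    intro k hk
    simp only [Finset.mem_Icc] at hk
    obtain ⟨hk1, hkmd⟩ := hk
    have hkm : k * d ≤ m := (Nat.le_div_iff_mul_le (by omega)).mp hkmd
    set g := Nat.gcd k m with hg
    have hg0 : 0 < g := Nat.gcd_pos_of_pos_left m (by omega)
    have hgk : g ∣ k := Nat.gcd_dvd_left k m
    have hgm : g ∣ m := Nat.gcd_dvd_right k m
    simp only [Finset.mem_sigma, Nat.mem_divisors, Finset.mem_filter, Finset.mem_Icc]
    refine ⟨⟨Nat.div_dvd_of_dvd hgm, by omega⟩, ⟨?_, ?_⟩, ?_⟩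
    · exact Nat.one_le_div_iff hg0 |>.mpr (Nat.le_of_dvd (by omega) hgk)
    · rw [Nat.le_div_iff_mul_le (by omega), Nat.le_div_iff_mul_le hg0]
      calc k / g * d * g = k / g * g * d := by ring
        _ = k * d := by rw [Nat.div_mul_cancel hgk]
        _ ≤ m := hkm
    · exact Nat.coprime_div_gcd_div_gcd hg0
  case left =>
    rintro ⟨r, j⟩ hp
    simp only [Finset.mem_sigma, Nat.mem_divisors, Finset.mem_filter, Finset.mem_Icc] at hp
    obtain ⟨⟨hrm, hm0⟩, ⟨hj1, hjrd⟩, hgcd⟩ := hp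
    have hr0 : 0 < r := Nat.pos_of_dvd_of_pos hrm (by omega)
    have hmr : 0 < m / r := Nat.div_pos (Nat.le_of_dvd (by omega) hrm) hr0
    have hgcdk : Nat.gcd (j * (m / r)) m = m / r := by
      obtain ⟨t, ht⟩ : ∃ t, m = r * t := hrm
      have htt : m / r = t := by rw [ht, Nat.mul_div_cancel_left _ hr0]
      rw [htt, ht, Nat.gcd_mul_right, hgcd, one_mul]
    show (⟨m / Nat.gcd (j * (m / r)) m, j * (m / r) / Nat.gcd (j * (m / r)) m⟩ : Σ _ : ℕ, ℕ) = ⟨r, j⟩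
    rw [hgcdk, Nat.div_div_self hrm (by omega), Nat.mul_div_cancel _ hmr]
  case right =>
    intro k hk
    simp only [Finset.mem_Icc] at hk
    set g := Nat.gcd k m with hg
    have hg0 : 0 < g := Nat.gcd_pos_of_pos_left m (by omega)
    have hgk : g ∣ k := Nat.gcd_dvd_left k m
    have hgm : g ∣ m := Nat.gcd_dvd_right k m
    show k / g * (m / (m / g)) = k
    rw [Nat.div_div_self hgm (by omega), Nat.div_mul_cancel hgk]



lemma cyc_prime (r : ℕ) (hr : 1 ≤ r) : Prime (cyclotomic r ℚ) :=
  (cyclotomic.irreducible_rat hr).prime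

lemma cyc_coeff0_ne (r : ℕ) (hr : 1 ≤ r) : (cyclotomic r ℚ).coeff 0 ≠ 0 := by
  rcases eq_or_lt_of_le hr with h | h
  · rw [← h, cyclotomic_one]
    simp
  · rw [cyclotomic_coeff_zero ℚ h]
    norm_num

lemma cyc_not_dvd_X_pow (r a : ℕ) (hr : 1 ≤ r) : ¬ cyclotomic r ℚ ∣ X ^ a := by
  intro h
  have hX : cyclotomic r ℚ ∣ X := (cyc_prime r hr).dvd_of_dvd_pow h
  have hassoc : Associated (cyclotomic r ℚ) X :=
    (cyclotomic.irreducible_rat hr).associated_of_dvd irreducible_X hX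
  have heq : cyclotomic r ℚ = X :=
    eq_of_monic_of_associated (cyclotomic.monic r ℚ) monic_X hassoc
  exact cyc_coeff0_ne r hr (by rw [heq]; simp)

lemma X_pow_sub_one_ne (m : ℕ) (hm : 1 ≤ m) : ((X : ℚ[X]) ^ m - 1) ≠ 0 := by
  have := X_pow_sub_C_ne_zero (R := ℚ) (by omega : 0 < m) 1
  simpa using this

lemma not_X_dvd_X_pow_sub_one (m : ℕ) (hm : 1 ≤ m) : ¬ (X : ℚ[X]) ∣ (X ^ m - 1) := by
  rw [X_dvd_iff]
  simp only [coeff_sub, coeff_X_pow, coeff_one, if_neg (by omega : ¬ (0 = m))]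
  norm_num

lemma mult_cyc_X_pow_sub_one (r m : ℕ) (hr : 1 ≤ r) (hm : 1 ≤ m) :
    multiplicity (cyclotomic r ℚ) ((X : ℚ[X]) ^ m - 1) = if r ∣ m then 1 else 0 := by
  split_ifs with h
  · apply multiplicity_eq_of_dvd_of_not_dvd
    · rw [pow_one, ← prod_cyclotomic_eq_X_pow_sub_one (by omega : 0 < m) ℚ]
      exact Finset.dvd_prod_of_mem _ (Nat.mem_divisors.mpr ⟨h, by omega⟩)
    · intro hdvd
      have hsf : Squarefree ((X : ℚ[X]) ^ m - 1) := by
        have hsep : ((X : ℚ[X]) ^ m - C 1).Separable :=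
          separable_X_pow_sub_C 1 (by exact_mod_cast (by omega : m ≠ 0)) one_ne_zero
        rw [map_one] at hsep
        exact hsep.squarefree
      rw [pow_two] at hdvd
      exact (cyc_prime r hr).not_unit (hsf _ hdvd)
  · rw [multiplicity_eq_zero]
    intro hdvd
    rw [← prod_cyclotomic_eq_X_pow_sub_one (by omega : 0 < m) ℚ] at hdvd
    obtain ⟨s, hs, hdvd'⟩ := (cyc_prime r hr).exists_mem_finset_dvd hdvd
    rw [Nat.mem_divisors] at hs
    have hs1 : 1 ≤ s := Nat.pos_of_dvd_of_pos hs.1 (by omega)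
    have : cyclotomic r ℚ = cyclotomic s ℚ :=
      eq_of_monic_of_associated (cyclotomic.monic r ℚ) (cyclotomic.monic s ℚ)
        ((cyclotomic.irreducible_rat hr).associated_of_dvd (cyclotomic.irreducible_rat hs1) hdvd')
    exact h (cyclotomic_injective this ▸ hs.1)

lemma X_pow_add_one_eq (m : ℕ) : ((X : ℚ[X]) ^ m + 1) = X ^ m - C (-1) := by
  simp [sub_neg_eq_add]

lemma X_pow_add_one_ne (m : ℕ) (hm : 1 ≤ m) : ((X : ℚ[X]) ^ m + 1) ≠ 0 := by
  rw [X_pow_add_one_eq]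
  exact X_pow_sub_C_ne_zero (by omega) _

lemma not_X_dvd_X_pow_add_one (m : ℕ) (hm : 1 ≤ m) : ¬ (X : ℚ[X]) ∣ (X ^ m + 1) := by
  rw [X_dvd_iff]
  simp only [coeff_add, coeff_X_pow, coeff_one, if_neg (by omega : ¬ (0 = m))]
  norm_num

lemma natDegree_X_pow_add_one (m : ℕ) : ((X : ℚ[X]) ^ m + 1).natDegree = m := by
  rw [X_pow_add_one_eq]; exact natDegree_X_pow_sub_C

lemma sub_mul_add (m : ℕ) :
    ((X : ℚ[X]) ^ m - 1) * (X ^ m + 1) = X ^ (2 * m) - 1 := by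
  rw [two_mul, pow_add]; ring

lemma mult_cyc_X_pow_add_one (r m : ℕ) (hr : 1 ≤ r) (hm : 1 ≤ m) :
    multiplicity (cyclotomic r ℚ) ((X : ℚ[X]) ^ m + 1)
      = if r ∣ 2 * m ∧ ¬ r ∣ m then 1 else 0 := by
  have hfin : FiniteMultiplicity (cyclotomic r ℚ) (((X : ℚ[X]) ^ m - 1) * (X ^ m + 1)) :=
    FiniteMultiplicity.of_prime_left (cyc_prime r hr)
      (mul_ne_zero (X_pow_sub_one_ne m hm) (X_pow_add_one_ne m hm))
  have key := multiplicity_mul (cyc_prime r hr) hfin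
  rw [sub_mul_add, mult_cyc_X_pow_sub_one r (2 * m) hr (by omega),
    mult_cyc_X_pow_sub_one r m hr hm] at key
  by_cases h1 : r ∣ m
  · have h2 : r ∣ 2 * m := h1.mul_left 2
    rw [if_pos h2, if_pos h1] at key
    rw [if_neg (by tauto)]
    omega
  · by_cases h2 : r ∣ 2 * m
    · rw [if_pos h2, if_neg h1] at key
      rw [if_pos ⟨h2, h1⟩]
      omega
    · rw [if_neg h2, if_neg h1] at key
      rw [if_neg (by tauto)]
      omega

lemma mult_X_mul (a : ℕ) (g : ℚ[X]) (hg0 : g ≠ 0) (hXg : ¬ (X : ℚ[X]) ∣ g) :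
    multiplicity (X : ℚ[X]) (X ^ a * g) = a := by
  have hfin : FiniteMultiplicity (X : ℚ[X]) (X ^ a * g) :=
    FiniteMultiplicity.of_prime_left prime_X (mul_ne_zero (pow_ne_zero _ X_ne_zero) hg0)
  rw [multiplicity_mul prime_X hfin, multiplicity_pow_self_of_prime prime_X,
    multiplicity_eq_zero.mpr hXg, add_zero]

lemma mult_cyc_mul (r a : ℕ) (g : ℚ[X]) (hr : 1 ≤ r) (hg0 : g ≠ 0) :
    multiplicity (cyclotomic r ℚ) (X ^ a * g) = multiplicity (cyclotomic r ℚ) g := by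
  have hfin : FiniteMultiplicity (cyclotomic r ℚ) (X ^ a * g) :=
    FiniteMultiplicity.of_prime_left (cyc_prime r hr)
      (mul_ne_zero (pow_ne_zero _ X_ne_zero) hg0)
  rw [multiplicity_mul (cyc_prime r hr) hfin,
    multiplicity_eq_zero.mpr (cyc_not_dvd_X_pow r a hr), zero_add]

lemma Bd_eq (d a : ℕ) (g : ℚ[X]) (D : Finset ℕ)
    (hg0 : g ≠ 0) (hXg : ¬ (X : ℚ[X]) ∣ g)
    (hDsub : D ⊆ Finset.Icc 1 (2 * (a + g.natDegree) ^ 2 + 1))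
    (hmult : ∀ r, 1 ≤ r → multiplicity (cyclotomic r ℚ) g = if r ∈ D then 1 else 0) :
    Bd d (X ^ a * g) = 2 * a + ∑ r ∈ D, ((Nat.totient r : ℚ) + d * phiD d r) := by
  have hdeg : (X ^ a * g).natDegree = a + g.natDegree := by
    rw [natDegree_mul (pow_ne_zero _ X_ne_zero) hg0, natDegree_X_pow]
  unfold Bd
  rw [hdeg, mult_X_mul a g hg0 hXg]
  congr 1
  rw [← Finset.sum_subset hDsub]
  · apply Finset.sum_congr rfl
    intro r hrD
    have hr1 : 1 ≤ r := by
      have := hDsub hrD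
      simp only [Finset.mem_Icc] at this
      exact this.1
    rw [mult_cyc_mul r a g hr1 hg0, hmult r hr1, if_pos hrD, Nat.cast_one, one_mul]
  · intro r hr hrD
    have hr1 : 1 ≤ r := by
      simp only [Finset.mem_Icc] at hr
      exact hr.1
    rw [mult_cyc_mul r a g hr1 hg0, hmult r hr1, if_neg hrD, Nat.cast_zero, zero_mul]

lemma weight_sum (d m : ℕ) (hd : 2 ≤ d) (hm : 1 ≤ m) :
    ∑ r ∈ m.divisors, ((Nat.totient r : ℚ) + d * phiD d r)
      = m + d * (1 / 2 + ((m / d : ℕ) : ℚ)) := by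
  rw [Finset.sum_add_distrib]
  have h1 : ∑ r ∈ m.divisors, ((Nat.totient r : ℚ)) = m := by
    rw [← Nat.cast_sum]
    exact_mod_cast congrArg (Nat.cast : ℕ → ℚ) (Nat.sum_totient m)
  have h2 : ∑ r ∈ m.divisors, phiD d r = 1 / 2 + ((m / d : ℕ) : ℚ) := by
    have hre : ∀ r ∈ m.divisors, phiD d r =
        (((Finset.Icc 1 (r / d)).filter fun j => Nat.gcd j r = 1).card : ℚ)
          + (if r = 1 then (1:ℚ)/2 else 0) := by
      intro r hr
      by_cases h : r = 1
      · subst h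
        rw [phiD, if_pos rfl, if_pos rfl]
        rw [Nat.div_eq_of_lt (by omega), show Finset.Icc 1 0 = ∅ by rfl]
        simp
      · rw [phiD, if_neg h, if_neg h, add_zero]
    rw [Finset.sum_congr rfl hre, Finset.sum_add_distrib]
    have h3 : ∑ r ∈ m.divisors,
        ((((Finset.Icc 1 (r / d)).filter fun j => Nat.gcd j r = 1).card : ℚ))
        = ((m / d : ℕ) : ℚ) := by
      rw [← Nat.cast_sum]
      exact_mod_cast congrArg (Nat.cast : ℕ → ℚ) (count_lem d m hd hm)
    rw [h3, Finset.sum_ite_eq' m.divisors 1 (fun _ => (1:ℚ)/2),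
      if_pos (Nat.one_mem_divisors.mpr (by omega))]
    ring
  rw [h1, ← Finset.mul_sum, h2]

lemma Bd_sub_formula (d a b : ℕ) (hd : 2 ≤ d) (h : b < a) :
    Bd d (X ^ a - X ^ b : ℚ[X])
      = a + b + d * (1 / 2 + (((a - b) / d : ℕ) : ℚ)) := by
  set m := a - b with hm
  have hm1 : 1 ≤ m := by omega
  have hfact : (X ^ a - X ^ b : ℚ[X]) = X ^ b * (X ^ m - 1) := by
    rw [mul_sub, mul_one, ← pow_add, hm]
    congr 2
    omega
  rw [hfact, Bd_eq d b (X ^ m - 1) m.divisors (X_pow_sub_one_ne m hm1)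
    (not_X_dvd_X_pow_sub_one m hm1) ?sub ?mult, weight_sum d m hd hm1]
  · have hc : (m : ℚ) = (a : ℚ) - b := by
      rw [hm, Nat.cast_sub h.le]
    rw [hc]
    ring
  case sub =>
    intro r hr
    rw [Nat.mem_divisors] at hr
    have h1 : 1 ≤ r := Nat.pos_of_dvd_of_pos hr.1 (by omega)
    have h2 : r ≤ m := Nat.le_of_dvd (by omega) hr.1
    have hdeg : ((X : ℚ[X]) ^ m - 1).natDegree = m := by
      have := natDegree_X_pow_sub_C (n := m) (r := (1:ℚ))
      simpa using this
    rw [hdeg]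
    simp only [Finset.mem_Icc]
    constructor
    · exact h1
    · nlinarith
  case mult =>
    intro r hr
    rw [mult_cyc_X_pow_sub_one r m hr hm1]
    by_cases hdvd : r ∣ m
    · rw [if_pos hdvd, if_pos (Nat.mem_divisors.mpr ⟨hdvd, by omega⟩)]
    · rw [if_neg hdvd, if_neg (fun hc => hdvd (Nat.mem_divisors.mp hc).1)]

lemma Bd_add_formula (d a b : ℕ) (hd : 2 ≤ d) (h : b < a) :
    Bd d (X ^ a + X ^ b : ℚ[X])
      = a + b + d * ((((2 * (a - b)) / d : ℕ) : ℚ) - (((a - b) / d : ℕ) : ℚ)) := by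
  set m := a - b with hm
  have hm1 : 1 ≤ m := by omega
  have hfact : (X ^ a + X ^ b : ℚ[X]) = X ^ b * (X ^ m + 1) := by
    rw [mul_add, mul_one, ← pow_add, hm]
    rw [show b + (a - b) = a by omega]
  have hsubset : m.divisors ⊆ (2 * m).divisors :=
    Nat.divisors_subset_of_dvd (by omega) (dvd_mul_left m 2)
  rw [hfact, Bd_eq d b (X ^ m + 1) ((2 * m).divisors \ m.divisors)
    (X_pow_add_one_ne m hm1) (not_X_dvd_X_pow_add_one m hm1) ?sub ?mult]
  · rw [Finset.sum_sdiff_eq_sub hsubset, weight_sum d (2 * m) hd (by omega),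
      weight_sum d m hd hm1]
    have hc : (m : ℚ) = (a : ℚ) - b := by rw [hm, Nat.cast_sub h.le]
    push_cast [hc]
    ring
  case sub =>
    intro r hr
    simp only [Finset.mem_sdiff, Nat.mem_divisors] at hr
    have h1 : 1 ≤ r := Nat.pos_of_dvd_of_pos hr.1.1 (by omega)
    have h2 : r ≤ 2 * m := Nat.le_of_dvd (by omega) hr.1.1
    rw [natDegree_X_pow_add_one]
    simp only [Finset.mem_Icc]
    exact ⟨h1, by nlinarith⟩
  case mult =>
    intro r hr
    rw [mult_cyc_X_pow_add_one r m hr hm1]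
    by_cases hdvd : r ∣ 2 * m ∧ ¬ r ∣ m
    · rw [if_pos hdvd, if_pos]
      simp only [Finset.mem_sdiff, Nat.mem_divisors]
      exact ⟨⟨hdvd.1, by omega⟩, fun hc => hdvd.2 hc.1⟩
    · rw [if_neg hdvd, if_neg]
      simp only [Finset.mem_sdiff, Nat.mem_divisors]
      rintro ⟨⟨h1, -⟩, h2⟩
      exact hdvd ⟨h1, fun hc => h2 ⟨hc, by omega⟩⟩

lemma Bd_two_pow (d a : ℕ) : Bd d (X ^ a + X ^ a : ℚ[X]) = 2 * a := by
  have hfact : (X ^ a + X ^ a : ℚ[X]) = X ^ a * (C 2) := by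
    rw [mul_comm]
    have : (C (2:ℚ) : ℚ[X]) = 2 := by
      rw [show (2:ℚ) = ((2:ℕ):ℚ) by norm_num, C_eq_natCast]
      norm_num
    rw [this]
    ring
  have hC2 : (C 2 : ℚ[X]) ≠ 0 := by
    simp
  have hXC : ¬ (X : ℚ[X]) ∣ C 2 := by
    rw [X_dvd_iff]
    simp
  rw [hfact, Bd_eq d a (C 2) ∅ hC2 hXC (Finset.empty_subset _) ?mult]
  · simp
  case mult =>
    intro r hr
    rw [if_neg (Finset.notMem_empty r), multiplicity_eq_zero]
    intro hdvd
    have : IsUnit (C (2:ℚ)) := isUnit_C.mpr (by norm_num)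
    exact (cyc_prime r hr).not_unit (isUnit_of_dvd_unit hdvd this)

lemma Bd_neg (d : ℕ) (f : ℚ[X]) : Bd d (-f) = Bd d f := by
  unfold Bd
  rw [natDegree_neg]
  congr 1
  · rw [multiplicity_neg]
  · apply Finset.sum_congr rfl
    intro r _
    rw [multiplicity_neg]

/-- Let `d ≥ 2` be even and `e = d/2`, and let `i, j ≥ 0` be integers; when `j > i`,
suppose additionally that `e` does not divide `j − i`. Then
`B_d(q^{i+e} + q^j) − B_d(q^i − q^j)` equals `d` if `i > j` and `0` if `i < j`; and
`B_d(q^{i+e} − q^j) − B_d(q^i + q^j)` equals `d` if `i − j > −e` and `0` if `i − j < −e`. -/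
theorem Bd_cohook_differences (d i j : ℕ) (hd : 2 ≤ d) (heven : d % 2 = 0)
    (hndvd : i < j → ¬ (d / 2 ∣ (j - i))) :
    ((j < i → Bd d (X ^ (i + d / 2) + X ^ j) - Bd d (X ^ i - X ^ j) = d) ∧
      (i < j → Bd d (X ^ (i + d / 2) + X ^ j) - Bd d (X ^ i - X ^ j) = 0)) ∧
    ((j < i + d / 2 → Bd d (X ^ (i + d / 2) - X ^ j) - Bd d (X ^ i + X ^ j) = d) ∧
      (i + d / 2 < j → Bd d (X ^ (i + d / 2) - X ^ j) - Bd d (X ^ i + X ^ j) = 0)) := by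
  set e := d / 2 with hedef
  have he : d = 2 * e := by omega
  have he1 : 1 ≤ e := by omega
  have hd2 : (d : ℚ) = 2 * (e : ℚ) := by rw [he]; push_cast; ring
  refine ⟨⟨?p1a, ?p1b⟩, ?p2a, ?p2b⟩
  case p1a =>
    intro hji
    rw [Bd_add_formula d (i + e) j hd (by omega), Bd_sub_formula d i j hd hji]
    have H : 2 * ((i + e) - j) / d = ((i + e) - j) / d + (i - j) / d + 1 := by
      rw [show (i + e) - j = (i - j) + e by omega, he,
        Nat.mul_div_mul_left _ _ (by omega : 0 < 2)]
      exact natlem1 e (i - j) he1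
    simp only [H]
    push_cast
    linarith
  case p1b =>
    intro hij
    have hne : ¬ e ∣ (j - i) := hndvd hij
    have hXsub : (X ^ i - X ^ j : ℚ[X]) = -(X ^ j - X ^ i) := by ring
    rw [hXsub, Bd_neg, Bd_sub_formula d j i hd hij]
    rcases lt_trichotomy j (i + e) with hlt | heq | hgt
    · rw [Bd_add_formula d (i + e) j hd (by omega)]
      have H1 : 2 * ((i + e) - j) / d = 0 := Nat.div_eq_of_lt (by omega)
      have H2 : ((i + e) - j) / d = 0 := Nat.div_eq_of_lt (by omega)
      have H3 : (j - i) / d = 0 := Nat.div_eq_of_lt (by omega)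
      simp only [H1, H2, H3]
      push_cast
      linarith
    · exfalso; exact hne ⟨1, by omega⟩
    · rw [add_comm ((X : ℚ[X]) ^ (i + e)) (X ^ j), Bd_add_formula d j (i + e) hd hgt]
      have H : 2 * (j - (i + e)) / d = (j - (i + e)) / d + (j - i) / d := by
        rw [he, Nat.mul_div_mul_left _ _ (by omega : 0 < 2),
          show j - i = (j - (i + e)) + e by omega]
        exact natlem2 e (j - (i + e)) he1
      simp only [H]
      push_cast
      linarith
  case p2a =>
    intro hji
    rw [Bd_sub_formula d (i + e) j hd hji]
    rcases lt_trichotomy j i with hlt | heq | hgt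
    · rw [Bd_add_formula d i j hd hlt]
      have H : 2 * (i - j) / d = (i - j) / d + ((i + e) - j) / d := by
        rw [he, Nat.mul_div_mul_left _ _ (by omega : 0 < 2),
          show (i + e) - j = (i - j) + e by omega]
        exact natlem2 e (i - j) he1
      simp only [H]
      push_cast
      linarith
    · rw [heq, Bd_two_pow d i]
      have H : ((i + e) - i) / d = 0 := Nat.div_eq_of_lt (by omega)
      simp only [H]
      push_cast
      linarith
    · rw [add_comm ((X : ℚ[X]) ^ i) (X ^ j), Bd_add_formula d j i hd hgt]
      have H1 : ((i + e) - j) / d = 0 := Nat.div_eq_of_lt (by omega)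
      have H2 : 2 * (j - i) / d = 0 := Nat.div_eq_of_lt (by omega)
      have H3 : (j - i) / d = 0 := Nat.div_eq_of_lt (by omega)
      simp only [H1, H2, H3]
      push_cast
      linarith
  case p2b =>
    intro hij
    have hXsub : (X ^ (i + e) - X ^ j : ℚ[X]) = -(X ^ j - X ^ (i + e)) := by ring
    rw [hXsub, Bd_neg, Bd_sub_formula d j (i + e) hd hij,
      add_comm ((X : ℚ[X]) ^ i) (X ^ j), Bd_add_formula d j i hd (by omega)]
    have H : 2 * (j - i) / d = (j - i) / d + (j - (i + e)) / d + 1 := by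
      rw [he, Nat.mul_div_mul_left _ _ (by omega : 0 < 2),
        show j - i = (j - (i + e)) + e by omega]
      exact natlem1 e (j - (i + e)) he1
    simp only [H]
    push_cast
    linarith
end
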